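/- Let k be a field and let a_1, a_2, a_3 be positive integers with gcd(a_1,a_2,a_3) = 1, and let p(a) ⊆ k[X_1,X_2,X_3] be the kernel of the k-algebra homomorphism sending X_i to T^{a_i}. Then exactly one of the following holds: (a) p(a) is generated by two elements (a complete intersection), or (b) there exist positive integers α_1, α_2, β_1, β_2, γ_1, γ_2 such that p(a) is generated by the three 2×2 minors of the matrix with rows (X_1^{α_1}, X_2^{β_1}, X_3^{γ_1}) and (X_2^{β_2}, X_3^{γ_2}, X_1^{α_2}), namely X_1^{α_1}X_3^{γ_2} − X_2^{β_1+β_2}, X_1^{α_1}X_1^{α_2} − X_2^{β_2}X_3^{γ_1}, and X_2^{β_1}X_1^{α_2} − X_3^{γ_1+γ_2}. -/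

import Mathlib

open MvPolynomial

/-- The prime ideal defining the monomial curve `C(a)`: the kernel of the `k`-algebra
map `k[X_1, …, X_d] → k[T]`, `X_i ↦ T^{a i}`. -/
noncomputable def monomialCurveIdeal (k : Type*) [Field k] {d : ℕ} (a : Fin d → ℕ) :
    Ideal (MvPolynomial (Fin d) k) :=
  RingHom.ker (MvPolynomial.aeval (R := k) fun i => (Polynomial.X : Polynomial k) ^ a i)

section HerzogAux


/-- least positive `c` with `c*p` in the numerical semigroup generated by `q, r`. -/
noncomputable def cc (p q r : ℕ) : ℕ :=
  sInf {c | 0 < c ∧ ∃ x y, c * p = x * q + y * r}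

lemma cc_setNe (p q r : ℕ) (hq : 0 < q) : {c | 0 < c ∧ ∃ x y, c * p = x * q + y * r}.Nonempty :=
  ⟨q, hq, p, 0, by ring⟩

lemma cc_pos (p q r : ℕ) (hq : 0 < q) : 0 < cc p q r :=
  (Nat.sInf_mem (cc_setNe p q r hq)).1

lemma cc_spec (p q r : ℕ) (hq : 0 < q) : ∃ x y, cc p q r * p = x * q + y * r :=
  (Nat.sInf_mem (cc_setNe p q r hq)).2

lemma cc_min {p q r c x y : ℕ} (hc : 0 < c) (h : c * p = x * q + y * r) : cc p q r ≤ c :=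
  Nat.sInf_le ⟨hc, x, y, h⟩

lemma cc_swap (p q r : ℕ) : cc p q r = cc p r q := by
  unfold cc
  congr 1
  ext c
  exact ⟨fun ⟨h, x, y, e⟩ => ⟨h, y, x, by omega⟩, fun ⟨h, x, y, e⟩ => ⟨h, y, x, by omega⟩⟩

/-- Minimality predicate. -/
def IsMinRel (c p q r : ℕ) : Prop :=
  0 < c ∧ (∃ x y, c * p = x * q + y * r) ∧ ∀ c' x y, 0 < c' → c' * p = x * q + y * r → c ≤ c'

lemma isMinRel_cc (p q r : ℕ) (hp : 0 < q) : IsMinRel (cc p q r) p q r :=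
  ⟨cc_pos p q r hp, cc_spec p q r hp, fun c' x y h1 h2 => cc_min h1 h2⟩

lemma isMinRel_swap {c p q r : ℕ} (h : IsMinRel c p q r) : IsMinRel c p r q := by
  obtain ⟨h1, ⟨x, y, e⟩, h3⟩ := h
  exact ⟨h1, ⟨y, x, by omega⟩, fun c' x y hc he => h3 c' y x hc (by omega)⟩

/-- key descent: a degenerate relation forces a "mutual pair". -/
lemma descent (V : ℕ) : ∀ p q r cp cq cr lam : ℕ, 0 < p → 0 < q → 0 < r →
    IsMinRel cp p q r → IsMinRel cq q p r → IsMinRel cr r p q →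
    cp * p = lam * q → cp * p ≤ V →
    (cp * p = cq * q ∨ cq * q = cr * r ∨ cr * r = cp * p) := by
  induction V with
  | zero =>
    intro p q r cp cq cr lam hp hq hr hcp hcq hcr hl hV
    have := hcp.1
    nlinarith [hcp.1]
  | succ V IH =>
    intro p q r cp cq cr lam hp hq hr hcp hcq hcr hl hV
    -- lam > 0
    have hcppos : 0 < cp * p := Nat.mul_pos hcp.1 hp
    have hlam : 0 < lam := by
      rcases Nat.eq_zero_or_pos lam with h | h
      · exfalso; rw [h, zero_mul] at hl; omega
      · exact h
    -- cq ≤ lam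
    have hle : cq ≤ lam := hcq.2.2 lam cp 0 hlam (by omega)
    rcases eq_or_lt_of_le hle with heq | hlt
    · left; rw [heq] at *; omega
    · -- cq < lam ; take a rep of cq * q
      obtain ⟨x, z, hxz⟩ := hcq.2.1
      have hsm : cq * q < cp * p := by
        calc cq * q < lam * q := (Nat.mul_lt_mul_right hq).mpr hlt
        _ = cp * p := hl.symm
      rcases Nat.eq_zero_or_pos x with hx0 | hxpos
      · -- cq * q = z * r : single rep on pair (q, r); recurse
        subst hx0
        have h' : cq * q = z * r := by omega
        have := IH q r p cq cr cp z hq hr hp (isMinRel_swap hcq) (isMinRel_swap hcr)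
          hcp h' (by omega)
        tauto
      · rcases Nat.eq_zero_or_pos z with hz0 | hzpos
        · -- cq * q = x * p : single rep on pair (q, p); recurse
          subst hz0
          have h' : cq * q = x * p := by omega
          have := IH q p r cq cp cr x hq hp hr hcq hcp (isMinRel_swap hcr) h' (by omega)
          tauto
        · -- both positive: contradiction with minimality of cp
          exfalso
          have hdm := Nat.div_add_mod lam cq
          have hmod : lam % cq < cq := Nat.mod_lt _ hcq.1
          set Q := lam / cq with hQ
          set R := lam % cq with hR
          have hQpos : 0 < Q := by
            rcases Nat.eq_zero_or_pos Q with h | h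
            · rw [h, Nat.mul_zero] at hdm; omega
            · exact h
          have key : cp * p = (Q * x) * p + ((R * q) + (Q * z) * r) := by
            calc cp * p = lam * q := hl
            _ = (cq * Q + R) * q := by rw [hdm]
            _ = Q * (cq * q) + R * q := by ring
            _ = Q * (x * p + z * r) + R * q := by rw [hxz]
            _ = (Q * x) * p + ((R * q) + (Q * z) * r) := by ring
          have hpos2 : 0 < (R * q) + (Q * z) * r :=
            Nat.lt_of_lt_of_le (Nat.mul_pos (Nat.mul_pos hQpos hzpos) hr) (Nat.le_add_left _ _)
          have hQx : Q * x < cp := by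
            by_contra hcon
            push_neg at hcon
            have : cp * p ≤ (Q * x) * p := Nat.mul_le_mul_right p hcon
            omega
          have h4 : (cp - Q * x) * p = R * q + (Q * z) * r := by
            have := Nat.sub_mul cp (Q * x) p
            omega
          have := hcp.2.2 (cp - Q * x) R (Q * z) (by omega) h4
          have : 0 < Q * x := Nat.mul_pos hQpos hxpos
          omega


variable {k : Type*} [Field k]

noncomputable def mn (k : Type*) [Field k] (p q r : ℕ) : MvPolynomial (Fin 3) k :=
  X 0 ^ p * X 1 ^ q * X 2 ^ r

def dwt (a : Fin 3 → ℕ) (p q r : ℕ) : ℕ := p * a 0 + q * a 1 + r * a 2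

lemma mn_mul (p q r p' q' r' : ℕ) :
    mn k (p+p') (q+q') (r+r') = mn k p q r * mn k p' q' r' := by unfold mn; ring

lemma aeval_mn (a : Fin 3 → ℕ) (p q r : ℕ) :
    aeval (R := k) (fun i => (Polynomial.X : Polynomial k) ^ a i) (mn k p q r)
      = Polynomial.X ^ dwt a p q r := by
  simp only [mn, map_mul, map_pow, aeval_X, ← pow_mul, ← pow_add, dwt]
  congr 1
  ring

lemma mem_mci_iff (a : Fin 3 → ℕ) (f : MvPolynomial (Fin 3) k) :
    f ∈ monomialCurveIdeal k a ↔
      aeval (R := k) (fun i => (Polynomial.X : Polynomial k) ^ a i) f = 0 := by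
  rfl

lemma bin_mem_mci {a : Fin 3 → ℕ} {p q r p' q' r' : ℕ} (h : dwt a p q r = dwt a p' q' r') :
    mn k p q r - mn k p' q' r' ∈ monomialCurveIdeal k a := by
  rw [mem_mci_iff, map_sub, aeval_mn, aeval_mn, h, sub_self]

lemma monomial_eq_mn (d : Fin 3 →₀ ℕ) (c : k) :
    monomial d c = C c * mn k (d 0) (d 1) (d 2) := by
  have hd : d = Finsupp.single 0 (d 0) + Finsupp.single 1 (d 1) + Finsupp.single 2 (d 2) := by
    ext i; fin_cases i <;> simp [Finsupp.single_apply]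
  rw [mn, X_pow_eq_monomial, X_pow_eq_monomial, X_pow_eq_monomial, monomial_mul, monomial_mul,
    C_mul_monomial]
  rw [← hd, mul_one, mul_one, mul_one]

/-- The kernel of the monomial map is generated by its binomials. -/
lemma mci_le_of_binomials (a : Fin 3 → ℕ) (J : Ideal (MvPolynomial (Fin 3) k))
    (hJ : ∀ p q r p' q' r', dwt a p q r = dwt a p' q' r' → mn k p q r - mn k p' q' r' ∈ J) :
    monomialCurveIdeal k a ≤ J := by
  suffices H : ∀ n (f : MvPolynomial (Fin 3) k), f.support.card ≤ n →
      f ∈ monomialCurveIdeal k a → f ∈ J by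
    intro f hf; exact H f.support.card f le_rfl hf
  intro n
  induction n with
  | zero =>
    intro f hcard _
    have : f.support = ∅ := Finset.card_eq_zero.mp (Nat.le_zero.mp hcard)
    rw [support_eq_empty.mp this]; exact zero_mem J
  | succ n IH =>
    intro f hcard hker
    by_cases h0 : f = 0
    · rw [h0]; exact zero_mem J
    · have hne : f.support.Nonempty :=
        Finset.nonempty_iff_ne_empty.mpr (fun h => h0 (support_eq_empty.mp h))
      obtain ⟨u, hu⟩ := hne
      have hcu : coeff u f ≠ 0 := mem_support_iff.mp hu
      -- find a second exponent of the same weight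
      have hex : ∃ v ∈ f.support, v ≠ u ∧ dwt a (v 0) (v 1) (v 2) = dwt a (u 0) (u 1) (u 2) := by
        by_contra hcon
        push_neg at hcon
        have hco : (aeval (R := k) (fun i => (Polynomial.X : Polynomial k) ^ a i) f).coeff
            (dwt a (u 0) (u 1) (u 2)) = coeff u f := by
          conv_lhs => rw [f.as_sum]
          rw [map_sum, Polynomial.finset_sum_coeff]
          rw [Finset.sum_eq_single u]
          · rw [monomial_eq_mn, map_mul, aeval_C, aeval_mn, Polynomial.algebraMap_eq,
              Polynomial.coeff_C_mul, Polynomial.coeff_X_pow, if_pos rfl, mul_one]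
          · intro v hv hvu
            rw [monomial_eq_mn, map_mul, aeval_C, aeval_mn, Polynomial.algebraMap_eq,
              Polynomial.coeff_C_mul, Polynomial.coeff_X_pow, if_neg, mul_zero]
            exact fun h => (hcon v hv hvu) h.symm
          · intro h; exact absurd hu h
        rw [(mem_mci_iff a f).mp hker] at hco
        simp at hco
        exact hcu hco.symm
      obtain ⟨v, hv, hvu, hdw⟩ := hex
      set c := coeff u f with hc
      set b : MvPolynomial (Fin 3) k :=
        mn k (u 0) (u 1) (u 2) - mn k (v 0) (v 1) (v 2) with hb
      set g := f - C c * b with hg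
      have hfg : f = g + C c * b := by rw [hg]; ring
      have hgker : g ∈ monomialCurveIdeal k a :=
        sub_mem hker (Ideal.mul_mem_left _ _ (bin_mem_mci hdw.symm))
      have hCb : C c * b = monomial u c - monomial v c := by
        rw [hb, mul_sub, ← monomial_eq_mn, ← monomial_eq_mn]
      have hsupp : g.support ⊆ f.support.erase u := by
        intro w hw
        rw [mem_support_iff] at hw
        have hcw : coeff w g = coeff w f - ((if u = w then c else 0) - if v = w then c else 0) := by
          rw [hg, hCb, coeff_sub, coeff_sub, coeff_monomial, coeff_monomial]
        rw [Finset.mem_erase]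
        constructor
        · rintro rfl
          rw [if_pos rfl, if_neg hvu] at hcw
          simp [hc] at hcw
          exact hw hcw
        · rw [mem_support_iff]
          intro hwf
          apply hw
          rw [hcw, hwf]
          have h1 : u ≠ w := by rintro rfl; exact (mem_support_iff.mp hu) hwf
          have h2 : v ≠ w := by rintro rfl; exact (mem_support_iff.mp hv) hwf
          rw [if_neg h1, if_neg h2]; ring
      have hgcard : g.support.card ≤ n := by
        have h1 := Finset.card_le_card hsupp
        have h2 : (f.support.erase u).card = f.support.card - 1 := Finset.card_erase_of_mem hu
        omega
      rw [hfg]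
      exact add_mem (IH g hgcard hgker)
        (Ideal.mul_mem_left _ _ (hJ _ _ _ _ _ _ hdw.symm))

/-- reduction step: a shared variable (or equality) lets us use the inductive hypothesis. -/
lemma reduce {a : Fin 3 → ℕ} (ha : ∀ i, 0 < a i) {J : Ideal (MvPolynomial (Fin 3) k)} {n : ℕ}
    (IH : ∀ m, m < n → ∀ p q r p' q' r', dwt a p q r = m → dwt a p' q' r' = m →
      mn k p q r - mn k p' q' r' ∈ J)
    {p q r p' q' r' : ℕ} (h1 : dwt a p q r = n) (h2 : dwt a p' q' r' = n)
    (hsh : (0 < p ∧ 0 < p') ∨ (0 < q ∧ 0 < q') ∨ (0 < r ∧ 0 < r') ∨ (p = p' ∧ q = q' ∧ r = r')) :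
    mn k p q r - mn k p' q' r' ∈ J := by
  have e0 : ∀ p q r : ℕ, dwt a (p+1) q r = dwt a p q r + a 0 := by intro p q r; unfold dwt; ring
  have e1 : ∀ p q r : ℕ, dwt a p (q+1) r = dwt a p q r + a 1 := by intro p q r; unfold dwt; ring
  have e2 : ∀ p q r : ℕ, dwt a p q (r+1) = dwt a p q r + a 2 := by intro p q r; unfold dwt; ring
  rcases hsh with ⟨hp, hp'⟩ | ⟨hq, hq'⟩ | ⟨hr, hr'⟩ | ⟨rfl, rfl, rfl⟩
  · obtain ⟨p₀, rfl⟩ : ∃ p₀, p = p₀ + 1 := ⟨p - 1, by omega⟩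
    obtain ⟨p₀', rfl⟩ : ∃ p₀', p' = p₀' + 1 := ⟨p' - 1, by omega⟩
    have key : mn k (p₀+1) q r - mn k (p₀'+1) q' r'
        = mn k 1 0 0 * (mn k p₀ q r - mn k p₀' q' r') := by unfold mn; ring
    rw [key]
    refine Ideal.mul_mem_left _ _ (IH (dwt a p₀ q r) ?_ _ _ _ _ _ _ rfl ?_)
    · have := e0 p₀ q r; have := ha 0; omega
    · have := e0 p₀ q r; have := e0 p₀' q' r'; omega
  · obtain ⟨q₀, rfl⟩ : ∃ q₀, q = q₀ + 1 := ⟨q - 1, by omega⟩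
    obtain ⟨q₀', rfl⟩ : ∃ q₀', q' = q₀' + 1 := ⟨q' - 1, by omega⟩
    have key : mn k p (q₀+1) r - mn k p' (q₀'+1) r'
        = mn k 0 1 0 * (mn k p q₀ r - mn k p' q₀' r') := by unfold mn; ring
    rw [key]
    refine Ideal.mul_mem_left _ _ (IH (dwt a p q₀ r) ?_ _ _ _ _ _ _ rfl ?_)
    · have := e1 p q₀ r; have := ha 1; omega
    · have := e1 p q₀ r; have := e1 p' q₀' r'; omega
  · obtain ⟨r₀, rfl⟩ : ∃ r₀, r = r₀ + 1 := ⟨r - 1, by omega⟩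
    obtain ⟨r₀', rfl⟩ : ∃ r₀', r' = r₀' + 1 := ⟨r' - 1, by omega⟩
    have key : mn k p q (r₀+1) - mn k p' q' (r₀'+1)
        = mn k 0 0 1 * (mn k p q r₀ - mn k p' q' r₀') := by unfold mn; ring
    rw [key]
    refine Ideal.mul_mem_left _ _ (IH (dwt a p q r₀) ?_ _ _ _ _ _ _ rfl ?_)
    · have := e2 p q r₀; have := ha 2; omega
    · have := e2 p q r₀; have := e2 p' q' r₀'; omega
  · rw [sub_self]; exact zero_mem J

lemma posl {x y : ℕ} (h : 0 < x * y) : 0 < x :=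
  Nat.pos_of_ne_zero (fun h0 => by subst h0; simp at h)

lemma caseB (a : Fin 3 → ℕ) (ha : ∀ i, 0 < a i)
    (h0 : ∀ x y, cc (a 0) (a 1) (a 2) * a 0 = x * a 1 + y * a 2 → 0 < x ∧ 0 < y)
    (h1 : ∀ x y, cc (a 1) (a 0) (a 2) * a 1 = x * a 0 + y * a 2 → 0 < x ∧ 0 < y)
    (h2 : ∀ x y, cc (a 2) (a 0) (a 1) * a 2 = x * a 0 + y * a 1 → 0 < x ∧ 0 < y) :
    ∃ α₁ α₂ β₁ β₂ γ₁ γ₂ : ℕ, 0 < α₁ ∧ 0 < α₂ ∧ 0 < β₁ ∧ 0 < β₂ ∧ 0 < γ₁ ∧ 0 < γ₂ ∧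
      monomialCurveIdeal k a = Ideal.span
        {(X 0 : MvPolynomial (Fin 3) k) ^ α₁ * X 2 ^ γ₂ - X 1 ^ (β₁ + β₂),
         (X 0 : MvPolynomial (Fin 3) k) ^ α₁ * X 0 ^ α₂ - X 1 ^ β₂ * X 2 ^ γ₁,
         (X 1 : MvPolynomial (Fin 3) k) ^ β₁ * X 0 ^ α₂ - X 2 ^ (γ₁ + γ₂)} := by
  obtain ⟨c0, hc0def⟩ : ∃ c0, c0 = cc (a 0) (a 1) (a 2) := ⟨_, rfl⟩
  obtain ⟨c1, hc1def⟩ : ∃ c1, c1 = cc (a 1) (a 0) (a 2) := ⟨_, rfl⟩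
  obtain ⟨c2, hc2def⟩ : ∃ c2, c2 = cc (a 2) (a 0) (a 1) := ⟨_, rfl⟩
  have c0min : ∀ c x y, 0 < c → c * a 0 = x * a 1 + y * a 2 → c0 ≤ c := by
    intro c x y hc h; rw [hc0def]; exact cc_min hc h
  have c1min : ∀ c x y, 0 < c → c * a 1 = x * a 0 + y * a 2 → c1 ≤ c := by
    intro c x y hc h; rw [hc1def]; exact cc_min hc h
  have c2min : ∀ c x y, 0 < c → c * a 2 = x * a 0 + y * a 1 → c2 ≤ c := by
    intro c x y hc h; rw [hc2def]; exact cc_min hc h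
  obtain ⟨s0, t0, hr0x⟩ : ∃ x y, c0 * a 0 = x * a 1 + y * a 2 := by
    rw [hc0def]; exact cc_spec (a 0) (a 1) (a 2) (ha 1)
  obtain ⟨α₁, γ₂, hr1⟩ : ∃ x y, c1 * a 1 = x * a 0 + y * a 2 := by
    rw [hc1def]; exact cc_spec (a 1) (a 0) (a 2) (ha 0)
  obtain ⟨α₂, β₁, hr2⟩ : ∃ x y, c2 * a 2 = x * a 0 + y * a 1 := by
    rw [hc2def]; exact cc_spec (a 2) (a 0) (a 1) (ha 0)
  have ⟨hα₁, hγ₂⟩ := h1 α₁ γ₂ (by rw [← hc1def]; exact hr1)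
  have ⟨hα₂, hβ₁⟩ := h2 α₂ β₁ (by rw [← hc2def]; exact hr2)
  have hc0 : 0 < c0 := by rw [hc0def]; exact cc_pos _ _ _ (ha 1)
  have hc1 : 0 < c1 := by rw [hc1def]; exact cc_pos _ _ _ (ha 0)
  have hc2 : 0 < c2 := by rw [hc2def]; exact cc_pos _ _ _ (ha 0)
  -- N1 : γ₂ < c2
  have N1 : γ₂ < c2 := by
    by_contra hcon
    push_neg at hcon
    obtain ⟨e, rfl⟩ : ∃ e, γ₂ = c2 + e := ⟨γ₂ - c2, by omega⟩
    have key : c1 * a 1 = (α₁ + α₂) * a 0 + β₁ * a 1 + e * a 2 := by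
      calc c1 * a 1 = α₁ * a 0 + (c2 + e) * a 2 := hr1
      _ = α₁ * a 0 + c2 * a 2 + e * a 2 := by ring
      _ = α₁ * a 0 + (α₂ * a 0 + β₁ * a 1) + e * a 2 := by rw [hr2]
      _ = (α₁ + α₂) * a 0 + β₁ * a 1 + e * a 2 := by ring
    have hpos : 0 < (α₁ + α₂) * a 0 := Nat.mul_pos (by omega) (ha 0)
    have h5 : β₁ * a 1 < c1 * a 1 := by omega
    have hb : β₁ < c1 := lt_of_mul_lt_mul_right h5 (Nat.zero_le _)
    have key2 : (c1 - β₁) * a 1 = (α₁ + α₂) * a 0 + e * a 2 := by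
      have := Nat.sub_mul c1 β₁ (a 1); omega
    have := c1min _ _ _ (by omega) key2
    omega
  -- N2 : β₁ < c1
  have N2 : β₁ < c1 := by
    by_contra hcon
    push_neg at hcon
    obtain ⟨e, rfl⟩ : ∃ e, β₁ = c1 + e := ⟨β₁ - c1, by omega⟩
    have key : c2 * a 2 = (α₁ + α₂) * a 0 + e * a 1 + γ₂ * a 2 := by
      calc c2 * a 2 = α₂ * a 0 + (c1 + e) * a 1 := hr2
      _ = α₂ * a 0 + c1 * a 1 + e * a 1 := by ring
      _ = α₂ * a 0 + (α₁ * a 0 + γ₂ * a 2) + e * a 1 := by rw [hr1]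
      _ = (α₁ + α₂) * a 0 + e * a 1 + γ₂ * a 2 := by ring
    have key2 : (c2 - γ₂) * a 2 = (α₁ + α₂) * a 0 + e * a 1 := by
      have := Nat.sub_mul c2 γ₂ (a 2); omega
    have := c2min _ _ _ (by omega) key2
    omega
  obtain ⟨β₂, hβ₂eq⟩ : ∃ β₂, c1 = β₁ + β₂ := ⟨c1 - β₁, by omega⟩
  obtain ⟨γ₁, hγ₁eq⟩ : ∃ γ₁, c2 = γ₂ + γ₁ := ⟨c2 - γ₂, by omega⟩
  have hβ₂ : 0 < β₂ := by omega
  have hγ₁ : 0 < γ₁ := by omega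
  -- N3
  have N3 : β₂ * a 1 + γ₁ * a 2 = α₁ * a 0 + α₂ * a 0 := by
    have hsum : c1 * a 1 + c2 * a 2 = α₁ * a 0 + α₂ * a 0 + β₁ * a 1 + γ₂ * a 2 := by
      rw [hr1, hr2]; ring
    have d1 : c1 * a 1 = β₁ * a 1 + β₂ * a 1 := by rw [hβ₂eq]; ring
    have d2 : c2 * a 2 = γ₂ * a 2 + γ₁ * a 2 := by rw [hγ₁eq]; ring
    omega
  have N3cc : (α₁ + α₂) * a 0 = β₂ * a 1 + γ₁ * a 2 := by rw [add_mul]; omega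
  -- N4 : c0 = α₁ + α₂
  have N4 : c0 = α₁ + α₂ := by
    have hle : c0 ≤ α₁ + α₂ := c0min _ _ _ (by omega) N3cc
    rcases eq_or_lt_of_le hle with h | hlt
    · exact h
    · exfalso
      obtain ⟨s, t, hr0⟩ : ∃ x y, c0 * a 0 = x * a 1 + y * a 2 := ⟨s0, t0, hr0x⟩
      obtain ⟨hs, ht⟩ := h0 s t (by rw [← hc0def]; exact hr0)
      obtain ⟨d, hd⟩ : ∃ d, α₁ + α₂ = c0 + d := ⟨α₁ + α₂ - c0, by omega⟩
      have hdpos : 0 < d := by omega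
      -- s < c1
      have hsc1 : s < c1 := by
        by_contra hcon
        push_neg at hcon
        obtain ⟨e, rfl⟩ : ∃ e, s = c1 + e := ⟨s - c1, by omega⟩
        have key : c0 * a 0 = α₁ * a 0 + e * a 1 + (γ₂ + t) * a 2 := by
          calc c0 * a 0 = (c1 + e) * a 1 + t * a 2 := hr0
          _ = c1 * a 1 + e * a 1 + t * a 2 := by ring
          _ = (α₁ * a 0 + γ₂ * a 2) + e * a 1 + t * a 2 := by rw [hr1]
          _ = α₁ * a 0 + e * a 1 + (γ₂ + t) * a 2 := by ring
        have hpos : 0 < (γ₂ + t) * a 2 := Nat.mul_pos (by omega) (ha 2)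
        have h5 : α₁ * a 0 < c0 * a 0 := by omega
        have hb : α₁ < c0 := lt_of_mul_lt_mul_right h5 (Nat.zero_le _)
        have key2 : (c0 - α₁) * a 0 = e * a 1 + (γ₂ + t) * a 2 := by
          have := Nat.sub_mul c0 α₁ (a 0); omega
        have := c0min _ _ _ (by omega) key2
        omega
      -- t < c2
      have htc2 : t < c2 := by
        by_contra hcon
        push_neg at hcon
        obtain ⟨e, rfl⟩ : ∃ e, t = c2 + e := ⟨t - c2, by omega⟩
        have key : c0 * a 0 = α₂ * a 0 + (s + β₁) * a 1 + e * a 2 := by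
          calc c0 * a 0 = s * a 1 + (c2 + e) * a 2 := hr0
          _ = s * a 1 + c2 * a 2 + e * a 2 := by ring
          _ = s * a 1 + (α₂ * a 0 + β₁ * a 1) + e * a 2 := by rw [hr2]
          _ = α₂ * a 0 + (s + β₁) * a 1 + e * a 2 := by ring
        have hpos : 0 < (s + β₁) * a 1 := Nat.mul_pos (by omega) (ha 1)
        have h5 : α₂ * a 0 < c0 * a 0 := by omega
        have hb : α₂ < c0 := lt_of_mul_lt_mul_right h5 (Nat.zero_le _)
        have key2 : (c0 - α₂) * a 0 = (s + β₁) * a 1 + e * a 2 := by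
          have := Nat.sub_mul c0 α₂ (a 0); omega
        have := c0min _ _ _ (by omega) key2
        omega
      -- main comparison
      have E : β₂ * a 1 + γ₁ * a 2 = d * a 0 + s * a 1 + t * a 2 := by
        have e3 : α₁ * a 0 + α₂ * a 0 = c0 * a 0 + d * a 0 := by
          calc α₁ * a 0 + α₂ * a 0 = (α₁ + α₂) * a 0 := by ring
          _ = (c0 + d) * a 0 := by rw [hd]
          _ = c0 * a 0 + d * a 0 := by ring
        omega
      have d1 : c1 * a 1 = β₁ * a 1 + β₂ * a 1 := by rw [hβ₂eq]; ring
      have d2 : c2 * a 2 = γ₂ * a 2 + γ₁ * a 2 := by rw [hγ₁eq]; ring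
      by_cases hbs : β₂ < s
      · obtain ⟨e, rfl⟩ : ∃ e, s = β₂ + e := ⟨s - β₂, by omega⟩
        have hepos : 0 < e := by omega
        have key : γ₁ * a 2 = d * a 0 + e * a 1 + t * a 2 := by
          have e4 : (β₂ + e) * a 1 = β₂ * a 1 + e * a 1 := by ring
          omega
        have hpos : 0 < d * a 0 + e * a 1 :=
          Nat.lt_of_lt_of_le (Nat.mul_pos hdpos (ha 0)) (Nat.le_add_right _ _)
        have h5 : t * a 2 < γ₁ * a 2 := by omega
        have hb : t < γ₁ := lt_of_mul_lt_mul_right h5 (Nat.zero_le _)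
        have key2 : (γ₁ - t) * a 2 = d * a 0 + e * a 1 := by
          have := Nat.sub_mul γ₁ t (a 2); omega
        have := c2min _ _ _ (by omega) key2
        omega
      · by_cases hgt : γ₁ < t
        · obtain ⟨e, rfl⟩ : ∃ e, t = γ₁ + e := ⟨t - γ₁, by omega⟩
          have hepos : 0 < e := by omega
          have key : β₂ * a 1 = d * a 0 + s * a 1 + e * a 2 := by
            have e4 : (γ₁ + e) * a 2 = γ₁ * a 2 + e * a 2 := by ring
            omega
          have hpos : 0 < d * a 0 + e * a 2 :=
            Nat.lt_of_lt_of_le (Nat.mul_pos hdpos (ha 0)) (Nat.le_add_right _ _)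
          have h5 : s * a 1 < β₂ * a 1 := by omega
          have hb : s < β₂ := lt_of_mul_lt_mul_right h5 (Nat.zero_le _)
          have key2 : (β₂ - s) * a 1 = d * a 0 + e * a 2 := by
            have := Nat.sub_mul β₂ s (a 1); omega
          have := c1min _ _ _ (by omega) key2
          omega
        · push_neg at hbs hgt
          have key2 : (β₂ - s) * a 1 + (γ₁ - t) * a 2 = d * a 0 := by
            have := Nat.sub_mul β₂ s (a 1)
            have := Nat.sub_mul γ₁ t (a 2)
            have l1 : s * a 1 ≤ β₂ * a 1 := Nat.mul_le_mul_right _ hbs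
            have l2 : t * a 2 ≤ γ₁ * a 2 := Nat.mul_le_mul_right _ hgt
            omega
          have hcd : c0 ≤ d := c0min _ _ _ hdpos key2.symm
          by_cases ha1c : c0 ≤ α₁
          · obtain ⟨e, rfl⟩ : ∃ e, α₁ = c0 + e := ⟨α₁ - c0, by omega⟩
            have key : c1 * a 1 = e * a 0 + s * a 1 + (t + γ₂) * a 2 := by
              calc c1 * a 1 = (c0 + e) * a 0 + γ₂ * a 2 := hr1
              _ = c0 * a 0 + e * a 0 + γ₂ * a 2 := by ring
              _ = (s * a 1 + t * a 2) + e * a 0 + γ₂ * a 2 := by rw [hr0]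
              _ = e * a 0 + s * a 1 + (t + γ₂) * a 2 := by ring
            have hpos : 0 < (t + γ₂) * a 2 := Nat.mul_pos (by omega) (ha 2)
            have h5 : s * a 1 < c1 * a 1 := by omega
            have hb : s < c1 := lt_of_mul_lt_mul_right h5 (Nat.zero_le _)
            have key2' : (c1 - s) * a 1 = e * a 0 + (t + γ₂) * a 2 := by
              have := Nat.sub_mul c1 s (a 1); omega
            have := c1min _ _ _ (by omega) key2'
            omega
          · have ha2c : c0 ≤ α₂ := by omega
            obtain ⟨e, rfl⟩ : ∃ e, α₂ = c0 + e := ⟨α₂ - c0, by omega⟩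
            have key : c2 * a 2 = e * a 0 + (s + β₁) * a 1 + t * a 2 := by
              calc c2 * a 2 = (c0 + e) * a 0 + β₁ * a 1 := hr2
              _ = c0 * a 0 + e * a 0 + β₁ * a 1 := by ring
              _ = (s * a 1 + t * a 2) + e * a 0 + β₁ * a 1 := by rw [hr0]
              _ = e * a 0 + (s + β₁) * a 1 + t * a 2 := by ring
            have hpos : 0 < (s + β₁) * a 1 := Nat.mul_pos (by omega) (ha 1)
            have h5 : t * a 2 < c2 * a 2 := by omega
            have hb : t < c2 := lt_of_mul_lt_mul_right h5 (Nat.zero_le _)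
            have key2' : (c2 - t) * a 2 = e * a 0 + (s + β₁) * a 1 := by
              have := Nat.sub_mul c2 t (a 2); omega
            have := c2min _ _ _ (by omega) key2'
            omega
  -- the three generators
  have hc1split : c1 = β₁ + β₂ := hβ₂eq
  have hc2split : c2 = γ₁ + γ₂ := by omega
  have hc0rel : c0 * a 0 = β₂ * a 1 + γ₁ * a 2 := by
    rw [N4]; exact N3cc
  set G1 : MvPolynomial (Fin 3) k := mn k 0 c1 0 - mn k α₁ 0 γ₂ with hG1
  set G2 : MvPolynomial (Fin 3) k := mn k c0 0 0 - mn k 0 β₂ γ₁ with hG2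
  set G3 : MvPolynomial (Fin 3) k := mn k 0 0 c2 - mn k α₂ β₁ 0 with hG3
  set J := Ideal.span {G1, G2, G3} with hJ
  have hG1J : G1 ∈ J := Ideal.subset_span (by simp)
  have hG2J : G2 ∈ J := Ideal.subset_span (by simp)
  have hG3J : G3 ∈ J := Ideal.subset_span (by simp)
  have negJ : ∀ x y : MvPolynomial (Fin 3) k, x - y ∈ J → y - x ∈ J := by
    intro x y h
    have := J.neg_mem h
    rwa [neg_sub] at this
  -- J ≤ ker
  have hJle : J ≤ monomialCurveIdeal k a := by
    rw [hJ, Ideal.span_le]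
    rintro f hf
    simp only [Set.mem_insert_iff, Set.mem_singleton_iff] at hf
    rcases hf with rfl | rfl | rfl
    · exact bin_mem_mci (by unfold dwt; omega)
    · exact bin_mem_mci (by unfold dwt; omega)
    · exact bin_mem_mci (by unfold dwt; omega)
  -- generation
  have main : ∀ n p q r p' q' r', dwt a p q r = n → dwt a p' q' r' = n →
      mn k p q r - mn k p' q' r' ∈ J := by
    intro n
    induction n using Nat.strong_induction_on with
    | _ n IH =>
    intro p q r p' q' r' hu hv
    by_cases hn : n = 0
    · subst hn
      unfold dwt at hu hv
      have e1 : p * a 0 = 0 := by omega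
      have e2 : q * a 1 = 0 := by omega
      have e3 : r * a 2 = 0 := by omega
      have e4 : p' * a 0 = 0 := by omega
      have e5 : q' * a 1 = 0 := by omega
      have e6 : r' * a 2 = 0 := by omega
      have z1 := Nat.mul_eq_zero.mp e1
      have z2 := Nat.mul_eq_zero.mp e2
      have z3 := Nat.mul_eq_zero.mp e3
      have z4 := Nat.mul_eq_zero.mp e4
      have z5 := Nat.mul_eq_zero.mp e5
      have z6 := Nat.mul_eq_zero.mp e6
      have ha0 := ha 0; have ha1 := ha 1; have ha2 := ha 2
      have : p = 0 ∧ q = 0 ∧ r = 0 ∧ p' = 0 ∧ q' = 0 ∧ r' = 0 := by omega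
      obtain ⟨rfl, rfl, rfl, rfl, rfl, rfl⟩ := this
      rw [sub_self]; exact zero_mem J
    · have hnpos : 0 < n := by omega
      by_cases hsh : (0 < p ∧ 0 < p') ∨ (0 < q ∧ 0 < q') ∨ (0 < r ∧ 0 < r')
          ∨ (p = p' ∧ q = q' ∧ r = r')
      · exact reduce ha IH hu hv hsh
      · push_neg at hsh
        obtain ⟨s1, s2, s3, _⟩ := hsh
        have hp : p = 0 ∨ p' = 0 := by omega
        have hq : q = 0 ∨ q' = 0 := by omega
        have hr : r = 0 ∨ r' = 0 := by omega
        -- the three "pure power" reductions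
        have pure0 : ∀ s y z, s * a 0 = n → y * a 1 + z * a 2 = n →
            mn k s 0 0 - mn k 0 y z ∈ J := by
          intro s y z hs hyz
          have hspos : 0 < s := posl (by omega : 0 < s * a 0)
          have hsc : c0 ≤ s := c0min s y z hspos (by omega)
          obtain ⟨s', rfl⟩ : ∃ s', s = c0 + s' := ⟨s - c0, by omega⟩
          have key : mn k (c0 + s') 0 0 - mn k 0 y z
              = mn k s' 0 0 * G2 + (mn k s' β₂ γ₁ - mn k 0 y z) := by
            rw [hG2]; unfold mn; ring
          rw [key]
          refine add_mem (Ideal.mul_mem_left _ _ hG2J) ?_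
          have hsum : (c0 + s') * a 0 = c0 * a 0 + s' * a 0 := by ring
          have hdu : dwt a s' β₂ γ₁ = n := by unfold dwt; omega
          have hdv : dwt a 0 y z = n := by unfold dwt; omega
          have hyzpos : 0 < y ∨ 0 < z := by
            by_contra hcon
            push_neg at hcon
            have : y = 0 ∧ z = 0 := by omega
            obtain ⟨rfl, rfl⟩ := this
            simp at hyz; omega
          refine reduce ha IH hdu hdv ?_
          rcases hyzpos with hy | hz
          · exact Or.inr (Or.inl ⟨hβ₂, hy⟩)
          · exact Or.inr (Or.inr (Or.inl ⟨hγ₁, hz⟩))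
        have pure1 : ∀ s x z, s * a 1 = n → x * a 0 + z * a 2 = n →
            mn k 0 s 0 - mn k x 0 z ∈ J := by
          intro s x z hs hxz
          have hspos : 0 < s := posl (by omega : 0 < s * a 1)
          have hsc : c1 ≤ s := c1min s x z hspos (by omega)
          obtain ⟨s', rfl⟩ : ∃ s', s = c1 + s' := ⟨s - c1, by omega⟩
          have key : mn k 0 (c1 + s') 0 - mn k x 0 z
              = mn k 0 s' 0 * G1 + (mn k α₁ s' γ₂ - mn k x 0 z) := by
            rw [hG1]; unfold mn; ring
          rw [key]
          refine add_mem (Ideal.mul_mem_left _ _ hG1J) ?_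
          have hsum : (c1 + s') * a 1 = c1 * a 1 + s' * a 1 := by ring
          have hdu : dwt a α₁ s' γ₂ = n := by unfold dwt; omega
          have hdv : dwt a x 0 z = n := by unfold dwt; omega
          have hxzpos : 0 < x ∨ 0 < z := by
            by_contra hcon
            push_neg at hcon
            have : x = 0 ∧ z = 0 := by omega
            obtain ⟨rfl, rfl⟩ := this
            simp at hxz; omega
          refine reduce ha IH hdu hdv ?_
          rcases hxzpos with hx | hz
          · exact Or.inl ⟨hα₁, hx⟩
          · exact Or.inr (Or.inr (Or.inl ⟨hγ₂, hz⟩))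
        have pure2 : ∀ s x y, s * a 2 = n → x * a 0 + y * a 1 = n →
            mn k 0 0 s - mn k x y 0 ∈ J := by
          intro s x y hs hxy
          have hspos : 0 < s := posl (by omega : 0 < s * a 2)
          have hsc : c2 ≤ s := c2min s x y hspos (by omega)
          obtain ⟨s', rfl⟩ : ∃ s', s = c2 + s' := ⟨s - c2, by omega⟩
          have key : mn k 0 0 (c2 + s') - mn k x y 0
              = mn k 0 0 s' * G3 + (mn k α₂ β₁ s' - mn k x y 0) := by
            rw [hG3]; unfold mn; ring
          rw [key]
          refine add_mem (Ideal.mul_mem_left _ _ hG3J) ?_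
          have hsum : (c2 + s') * a 2 = c2 * a 2 + s' * a 2 := by ring
          have hdu : dwt a α₂ β₁ s' = n := by unfold dwt; omega
          have hdv : dwt a x y 0 = n := by unfold dwt; omega
          have hxypos : 0 < x ∨ 0 < y := by
            by_contra hcon
            push_neg at hcon
            have : x = 0 ∧ y = 0 := by omega
            obtain ⟨rfl, rfl⟩ := this
            simp at hxy; omega
          refine reduce ha IH hdu hdv ?_
          rcases hxypos with hx | hy
          · exact Or.inl ⟨hα₂, hx⟩
          · exact Or.inr (Or.inl ⟨hβ₁, hy⟩)
        unfold dwt at hu hv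
        rcases hp with rfl | rfl <;> rcases hq with rfl | rfl <;> rcases hr with rfl | rfl
        · -- p=q=r=0
          exfalso; omega
        · -- p=0,q=0,r'=0 : u = (0,0,r)
          exact pure2 r p' q' (by omega) (by omega)
        · -- p=0,q'=0,r=0 : u = (0,q,0)
          exact pure1 q p' r' (by omega) (by omega)
        · -- p=0,q'=0,r'=0 : v = (p',0,0)
          exact negJ _ _ (pure0 p' q r (by omega) (by omega))
        · -- p'=0,q=0,r=0 : u = (p,0,0)
          exact pure0 p q' r' (by omega) (by omega)
        · -- p'=0,q=0,r'=0 : v = (0,q',0)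
          exact negJ _ _ (pure1 q' p r (by omega) (by omega))
        · -- p'=0,q'=0,r=0 : v = (0,0,r')
          exact negJ _ _ (pure2 r' p q (by omega) (by omega))
        · -- p'=q'=r'=0
          exfalso; omega
  have hker : monomialCurveIdeal k a = J := by
    refine le_antisymm (mci_le_of_binomials a J ?_) hJle
    intro p q r p' q' r' h
    exact main (dwt a p q r) p q r p' q' r' rfl h.symm
  -- convert to the required generator shapes
  refine ⟨α₁, α₂, β₁, β₂, γ₁, γ₂, hα₁, hα₂, hβ₁, hβ₂, hγ₁, hγ₂, ?_⟩
  rw [hker]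
  have e1 : (X 0 : MvPolynomial (Fin 3) k) ^ α₁ * X 2 ^ γ₂ - X 1 ^ (β₁ + β₂) = -G1 := by
    rw [hG1, ← hc1split]; unfold mn; ring
  have e2 : (X 0 : MvPolynomial (Fin 3) k) ^ α₁ * X 0 ^ α₂ - X 1 ^ β₂ * X 2 ^ γ₁ = G2 := by
    rw [hG2, N4]; unfold mn; ring
  have e3 : (X 1 : MvPolynomial (Fin 3) k) ^ β₁ * X 0 ^ α₂ - X 2 ^ (γ₁ + γ₂) = -G3 := by
    rw [hG3, ← hc2split]; unfold mn; ring
  rw [e1, e2, e3, hJ]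
  refine le_antisymm (Ideal.span_le.mpr ?_) (Ideal.span_le.mpr ?_)
  · rintro f hf
    simp only [Set.mem_insert_iff, Set.mem_singleton_iff] at hf
    rcases hf with rfl | rfl | rfl
    · have : -G1 ∈ Ideal.span {-G1, G2, -G3} := Ideal.subset_span (by simp)
      have := (Ideal.span {-G1, G2, -G3}).neg_mem this
      rwa [neg_neg] at this
    · exact Ideal.subset_span (by simp)
    · have : -G3 ∈ Ideal.span {-G1, G2, -G3} := Ideal.subset_span (by simp)
      have := (Ideal.span {-G1, G2, -G3}).neg_mem this
      rwa [neg_neg] at this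
  · rintro f hf
    simp only [Set.mem_insert_iff, Set.mem_singleton_iff] at hf
    rcases hf with rfl | rfl | rfl
    · have : G1 ∈ Ideal.span {G1, G2, G3} := hG1J
      exact (Ideal.span {G1, G2, G3}).neg_mem this
    · exact hG2J
    · have : G3 ∈ Ideal.span {G1, G2, G3} := hG3J
      exact (Ideal.span {G1, G2, G3}).neg_mem this

lemma caseA_core (b : Fin 3 → ℕ) (hb : ∀ i, 0 < b i)
    (hmut : cc (b 0) (b 1) (b 2) * b 0 = cc (b 1) (b 0) (b 2) * b 1) :
    ∃ f g : MvPolynomial (Fin 3) k, monomialCurveIdeal k b = Ideal.span {f, g} := by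
  obtain ⟨c0, hc0def⟩ : ∃ c0, c0 = cc (b 0) (b 1) (b 2) := ⟨_, rfl⟩
  obtain ⟨c1, hc1def⟩ : ∃ c1, c1 = cc (b 1) (b 0) (b 2) := ⟨_, rfl⟩
  obtain ⟨c2, hc2def⟩ : ∃ c2, c2 = cc (b 2) (b 0) (b 1) := ⟨_, rfl⟩
  have c0min : ∀ c x y, 0 < c → c * b 0 = x * b 1 + y * b 2 → c0 ≤ c := by
    intro c x y hc h; rw [hc0def]; exact cc_min hc h
  have c1min : ∀ c x y, 0 < c → c * b 1 = x * b 0 + y * b 2 → c1 ≤ c := by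
    intro c x y hc h; rw [hc1def]; exact cc_min hc h
  have c2min : ∀ c x y, 0 < c → c * b 2 = x * b 0 + y * b 1 → c2 ≤ c := by
    intro c x y hc h; rw [hc2def]; exact cc_min hc h
  obtain ⟨u, w, hr2⟩ : ∃ x y, c2 * b 2 = x * b 0 + y * b 1 := by
    rw [hc2def]; exact cc_spec (b 2) (b 0) (b 1) (hb 0)
  have hmut' : c0 * b 0 = c1 * b 1 := by rw [hc0def, hc1def]; exact hmut
  have hc0 : 0 < c0 := by rw [hc0def]; exact cc_pos _ _ _ (hb 1)
  have hc1 : 0 < c1 := by rw [hc1def]; exact cc_pos _ _ _ (hb 0)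
  have hc2 : 0 < c2 := by rw [hc2def]; exact cc_pos _ _ _ (hb 0)
  set G1 : MvPolynomial (Fin 3) k := mn k c0 0 0 - mn k 0 c1 0 with hG1
  set G2 : MvPolynomial (Fin 3) k := mn k 0 0 c2 - mn k u w 0 with hG2
  set J := Ideal.span {G1, G2} with hJ
  have hG1J : G1 ∈ J := Ideal.subset_span (by simp)
  have hG2J : G2 ∈ J := Ideal.subset_span (by simp)
  have negJ : ∀ x y : MvPolynomial (Fin 3) k, x - y ∈ J → y - x ∈ J := by
    intro x y h
    have := J.neg_mem h
    rwa [neg_sub] at this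
  have hJle : J ≤ monomialCurveIdeal k b := by
    rw [hJ, Ideal.span_le]
    rintro f hf
    simp only [Set.mem_insert_iff, Set.mem_singleton_iff] at hf
    rcases hf with rfl | rfl
    · exact bin_mem_mci (by unfold dwt; omega)
    · exact bin_mem_mci (by unfold dwt; omega)
  have main : ∀ n p q r p' q' r', dwt b p q r = n → dwt b p' q' r' = n →
      mn k p q r - mn k p' q' r' ∈ J := by
    intro n
    induction n using Nat.strong_induction_on with
    | _ n IH =>
    intro p q r p' q' r' hu hv
    by_cases hn : n = 0
    · subst hn
      unfold dwt at hu hv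
      have e1 : p * b 0 = 0 := by omega
      have e2 : q * b 1 = 0 := by omega
      have e3 : r * b 2 = 0 := by omega
      have e4 : p' * b 0 = 0 := by omega
      have e5 : q' * b 1 = 0 := by omega
      have e6 : r' * b 2 = 0 := by omega
      have z1 := Nat.mul_eq_zero.mp e1
      have z2 := Nat.mul_eq_zero.mp e2
      have z3 := Nat.mul_eq_zero.mp e3
      have z4 := Nat.mul_eq_zero.mp e4
      have z5 := Nat.mul_eq_zero.mp e5
      have z6 := Nat.mul_eq_zero.mp e6
      have hb0 := hb 0; have hb1 := hb 1; have hb2 := hb 2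
      have : p = 0 ∧ q = 0 ∧ r = 0 ∧ p' = 0 ∧ q' = 0 ∧ r' = 0 := by omega
      obtain ⟨rfl, rfl, rfl, rfl, rfl, rfl⟩ := this
      rw [sub_self]; exact zero_mem J
    · have hnpos : 0 < n := by omega
      by_cases hsh : (0 < p ∧ 0 < p') ∨ (0 < q ∧ 0 < q') ∨ (0 < r ∧ 0 < r')
          ∨ (p = p' ∧ q = q' ∧ r = r')
      · exact reduce hb IH hu hv hsh
      · push_neg at hsh
        obtain ⟨s1, s2, s3, _⟩ := hsh
        have hp : p = 0 ∨ p' = 0 := by omega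
        have hq : q = 0 ∨ q' = 0 := by omega
        have hr : r = 0 ∨ r' = 0 := by omega
        have pure0 : ∀ s y z, s * b 0 = n → y * b 1 + z * b 2 = n →
            mn k s 0 0 - mn k 0 y z ∈ J := by
          intro s y z hs hyz
          have hc2b2 : 0 < c2 * b 2 := Nat.mul_pos hc2 (hb 2)
          have hspos : 0 < s := posl (by omega : 0 < s * b 0)
          have hsc : c0 ≤ s := c0min s y z hspos (by omega)
          obtain ⟨s', rfl⟩ : ∃ s', s = c0 + s' := ⟨s - c0, by omega⟩
          have hadd : (c0 + s') * b 0 = c0 * b 0 + s' * b 0 := by ring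
          have key : mn k (c0 + s') 0 0 - mn k 0 y z
              = mn k s' 0 0 * G1 + (mn k s' c1 0 - mn k 0 y z) := by
            rw [hG1]; unfold mn; ring
          rw [key]
          refine add_mem (Ideal.mul_mem_left _ _ hG1J) ?_
          have hdu : dwt b s' c1 0 = n := by unfold dwt; omega
          have hdv : dwt b 0 y z = n := by unfold dwt; omega
          by_cases hy : 0 < y
          · exact reduce hb IH hdu hdv (Or.inr (Or.inl ⟨hc1, hy⟩))
          · -- y = 0, z > 0
            have hy0 : y = 0 := by omega
            subst hy0
            have hz : 0 < z := posl (by omega : 0 < z * b 2)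
            have hzc : c2 ≤ z := c2min z s' c1 hz (by omega)
            obtain ⟨z', rfl⟩ : ∃ z', z = c2 + z' := ⟨z - c2, by omega⟩
            have hadd2 : (c2 + z') * b 2 = c2 * b 2 + z' * b 2 := by ring
            have key2 : mn k s' c1 0 - mn k 0 0 (c2 + z')
                = -(mn k 0 0 z' * G2) - (mn k u w z' - mn k s' c1 0) := by
              rw [hG2]; unfold mn; ring
            rw [key2]
            refine sub_mem (J.neg_mem (Ideal.mul_mem_left _ _ hG2J)) ?_
            have hdu2 : dwt b u w z' = n := by unfold dwt; omega
            by_cases hw : 0 < w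
            · exact reduce hb IH hdu2 hdu (Or.inr (Or.inl ⟨hw, hc1⟩))
            · have hw0 : w = 0 := by omega
              subst hw0
              have hu2 : 0 < u := posl (by omega : 0 < u * b 0)
              by_cases hs' : 0 < s'
              · exact reduce hb IH hdu2 hdu (Or.inl ⟨hu2, hs'⟩)
              · have hs0 : s' = 0 := by omega
                subst hs0
                have key3 : mn k u 0 z' - mn k 0 c1 0
                    = G1 - (mn k c0 0 0 - mn k u 0 z') := by
                  rw [hG1]; unfold mn; ring
                rw [key3]
                refine sub_mem hG1J ?_
                have hdu3 : dwt b c0 0 0 = n := by unfold dwt; omega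
                exact reduce hb IH hdu3 hdu2 (Or.inl ⟨hc0, hu2⟩)
        have pure1 : ∀ s x z, s * b 1 = n → x * b 0 + z * b 2 = n →
            mn k 0 s 0 - mn k x 0 z ∈ J := by
          intro s x z hs hxz
          have hc2b2 : 0 < c2 * b 2 := Nat.mul_pos hc2 (hb 2)
          have hspos : 0 < s := posl (by omega : 0 < s * b 1)
          have hsc : c1 ≤ s := c1min s x z hspos (by omega)
          obtain ⟨s', rfl⟩ : ∃ s', s = c1 + s' := ⟨s - c1, by omega⟩
          have hadd : (c1 + s') * b 1 = c1 * b 1 + s' * b 1 := by ring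
          have key : mn k 0 (c1 + s') 0 - mn k x 0 z
              = -(mn k 0 s' 0 * G1) + (mn k c0 s' 0 - mn k x 0 z) := by
            rw [hG1]; unfold mn; ring
          rw [key]
          refine add_mem (J.neg_mem (Ideal.mul_mem_left _ _ hG1J)) ?_
          have hdu : dwt b c0 s' 0 = n := by unfold dwt; omega
          have hdv : dwt b x 0 z = n := by unfold dwt; omega
          by_cases hx : 0 < x
          · exact reduce hb IH hdu hdv (Or.inl ⟨hc0, hx⟩)
          · have hx0 : x = 0 := by omega
            subst hx0
            have hz : 0 < z := posl (by omega : 0 < z * b 2)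
            have hzc : c2 ≤ z := c2min z c0 s' hz (by omega)
            obtain ⟨z', rfl⟩ : ∃ z', z = c2 + z' := ⟨z - c2, by omega⟩
            have hadd2 : (c2 + z') * b 2 = c2 * b 2 + z' * b 2 := by ring
            have key2 : mn k c0 s' 0 - mn k 0 0 (c2 + z')
                = -(mn k 0 0 z' * G2) - (mn k u w z' - mn k c0 s' 0) := by
              rw [hG2]; unfold mn; ring
            rw [key2]
            refine sub_mem (J.neg_mem (Ideal.mul_mem_left _ _ hG2J)) ?_
            have hdu2 : dwt b u w z' = n := by unfold dwt; omega
            by_cases hu2 : 0 < u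
            · exact reduce hb IH hdu2 hdu (Or.inl ⟨hu2, hc0⟩)
            · have hu0 : u = 0 := by omega
              subst hu0
              have hw : 0 < w := posl (by omega : 0 < w * b 1)
              by_cases hs' : 0 < s'
              · exact reduce hb IH hdu2 hdu (Or.inr (Or.inl ⟨hw, hs'⟩))
              · have hs0 : s' = 0 := by omega
                subst hs0
                have key3 : mn k 0 w z' - mn k c0 0 0
                    = -G1 - (mn k 0 c1 0 - mn k 0 w z') := by
                  rw [hG1]; unfold mn; ring
                rw [key3]
                refine sub_mem (J.neg_mem hG1J) ?_
                have hdu3 : dwt b 0 c1 0 = n := by unfold dwt; omega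
                exact reduce hb IH hdu3 hdu2 (Or.inr (Or.inl ⟨hc1, hw⟩))
        have pure2 : ∀ s x y, s * b 2 = n → x * b 0 + y * b 1 = n →
            mn k 0 0 s - mn k x y 0 ∈ J := by
          intro s x y hs hxy
          have hc2b2 : 0 < c2 * b 2 := Nat.mul_pos hc2 (hb 2)
          have hspos : 0 < s := posl (by omega : 0 < s * b 2)
          have hsc : c2 ≤ s := c2min s x y hspos (by omega)
          obtain ⟨s', rfl⟩ : ∃ s', s = c2 + s' := ⟨s - c2, by omega⟩
          have hadd : (c2 + s') * b 2 = c2 * b 2 + s' * b 2 := by ring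
          have key : mn k 0 0 (c2 + s') - mn k x y 0
              = mn k 0 0 s' * G2 + (mn k u w s' - mn k x y 0) := by
            rw [hG2]; unfold mn; ring
          rw [key]
          refine add_mem (Ideal.mul_mem_left _ _ hG2J) ?_
          have hdu : dwt b u w s' = n := by unfold dwt; omega
          have hdv : dwt b x y 0 = n := by unfold dwt; omega
          by_cases hux : 0 < u ∧ 0 < x
          · exact reduce hb IH hdu hdv (Or.inl hux)
          · by_cases hwy : 0 < w ∧ 0 < y
            · exact reduce hb IH hdu hdv (Or.inr (Or.inl hwy))
            · by_cases hx : 0 < x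
              · -- u = 0, hence w > 0, hence y = 0
                have hu0 : u = 0 := by omega
                subst hu0
                have hw : 0 < w := posl (by omega : 0 < w * b 1)
                have hy0 : y = 0 := by omega
                subst hy0
                have hxc : c0 ≤ x := c0min x w s' hx (by omega)
                obtain ⟨x', rfl⟩ : ∃ x', x = c0 + x' := ⟨x - c0, by omega⟩
                have hadd2 : (c0 + x') * b 0 = c0 * b 0 + x' * b 0 := by ring
                have key2 : mn k 0 w s' - mn k (c0 + x') 0 0
                    = -(mn k x' 0 0 * G1) - (mn k x' c1 0 - mn k 0 w s') := by
                  rw [hG1]; unfold mn; ring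
                rw [key2]
                refine sub_mem (J.neg_mem (Ideal.mul_mem_left _ _ hG1J)) ?_
                have hdu2 : dwt b x' c1 0 = n := by unfold dwt; omega
                exact reduce hb IH hdu2 hdu (Or.inr (Or.inl ⟨hc1, hw⟩))
              · -- x = 0, y > 0, w = 0, u > 0
                have hx0 : x = 0 := by omega
                subst hx0
                have hy : 0 < y := posl (by omega : 0 < y * b 1)
                have hw0 : w = 0 := by omega
                subst hw0
                have hu2 : 0 < u := posl (by omega : 0 < u * b 0)
                have hyc : c1 ≤ y := c1min y u s' hy (by omega)
                obtain ⟨y', rfl⟩ : ∃ y', y = c1 + y' := ⟨y - c1, by omega⟩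
                have hadd2 : (c1 + y') * b 1 = c1 * b 1 + y' * b 1 := by ring
                have key2 : mn k u 0 s' - mn k 0 (c1 + y') 0
                    = mn k 0 y' 0 * G1 - (mn k c0 y' 0 - mn k u 0 s') := by
                  rw [hG1]; unfold mn; ring
                rw [key2]
                refine sub_mem (Ideal.mul_mem_left _ _ hG1J) ?_
                have hdu2 : dwt b c0 y' 0 = n := by unfold dwt; omega
                exact reduce hb IH hdu2 hdu (Or.inl ⟨hc0, hu2⟩)
        unfold dwt at hu hv
        rcases hp with rfl | rfl <;> rcases hq with rfl | rfl <;> rcases hr with rfl | rfl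
        · exfalso; omega
        · exact pure2 r p' q' (by omega) (by omega)
        · exact pure1 q p' r' (by omega) (by omega)
        · exact negJ _ _ (pure0 p' q r (by omega) (by omega))
        · exact pure0 p q' r' (by omega) (by omega)
        · exact negJ _ _ (pure1 q' p r (by omega) (by omega))
        · exact negJ _ _ (pure2 r' p q (by omega) (by omega))
        · exfalso; omega
  refine ⟨G1, G2, ?_⟩
  refine le_antisymm (mci_le_of_binomials b J ?_) hJle
  intro p q r p' q' r' h
  exact main (dwt b p q r) p q r p' q' r' rfl h.symm

lemma mci_rename (a : Fin 3 → ℕ) (σ : Equiv.Perm (Fin 3)) :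
    monomialCurveIdeal k a = Ideal.map (rename σ) (monomialCurveIdeal k (a ∘ σ)) := by
  have hsurj : Function.Surjective (rename (R := k) (σ : Fin 3 → Fin 3)) := fun p =>
    ⟨rename σ.symm p, by rw [rename_rename, Equiv.self_comp_symm, rename_id, AlgHom.id_apply]⟩
  have hcomap : monomialCurveIdeal k (a ∘ σ)
      = Ideal.comap (rename (σ : Fin 3 → Fin 3)) (monomialCurveIdeal k a) := by
    ext f
    rw [Ideal.mem_comap, mem_mci_iff, mem_mci_iff, aeval_rename]
    rfl
  rw [hcomap, Ideal.map_comap_of_surjective _ hsurj]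

lemma caseA (a : Fin 3 → ℕ) (ha : ∀ i, 0 < a i)
    (hM : cc (a 0) (a 1) (a 2) * a 0 = cc (a 1) (a 0) (a 2) * a 1
        ∨ cc (a 1) (a 0) (a 2) * a 1 = cc (a 2) (a 0) (a 1) * a 2
        ∨ cc (a 2) (a 0) (a 1) * a 2 = cc (a 0) (a 1) (a 2) * a 0) :
    ∃ f g : MvPolynomial (Fin 3) k, monomialCurveIdeal k a = Ideal.span {f, g} := by
  rcases hM with h | h | h
  · exact caseA_core a ha h
  · set σ : Equiv.Perm (Fin 3) := finRotate 3 with hσ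
    have e0 : σ 0 = 1 := by decide
    have e1 : σ 1 = 2 := by decide
    have e2 : σ 2 = 0 := by decide
    have hb : ∀ i, 0 < (a ∘ σ) i := fun i => ha _
    have hmut : cc ((a ∘ σ) 0) ((a ∘ σ) 1) ((a ∘ σ) 2) * (a ∘ σ) 0
        = cc ((a ∘ σ) 1) ((a ∘ σ) 0) ((a ∘ σ) 2) * (a ∘ σ) 1 := by
      show cc (a (σ 0)) (a (σ 1)) (a (σ 2)) * a (σ 0)
          = cc (a (σ 1)) (a (σ 0)) (a (σ 2)) * a (σ 1)
      rw [e0, e1, e2, cc_swap (a 1) (a 2) (a 0), cc_swap (a 2) (a 1) (a 0)]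
      exact h
    obtain ⟨f, g, hfg⟩ := caseA_core (k := k) (a ∘ σ) hb hmut
    refine ⟨rename σ f, rename σ g, ?_⟩
    rw [mci_rename a σ, hfg, Ideal.map_span, Set.image_insert_eq, Set.image_singleton]
  · set σ : Equiv.Perm (Fin 3) := (finRotate 3)⁻¹ with hσ
    have e0 : σ 0 = 2 := by decide
    have e1 : σ 1 = 0 := by decide
    have e2 : σ 2 = 1 := by decide
    have hb : ∀ i, 0 < (a ∘ σ) i := fun i => ha _
    have hmut : cc ((a ∘ σ) 0) ((a ∘ σ) 1) ((a ∘ σ) 2) * (a ∘ σ) 0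
        = cc ((a ∘ σ) 1) ((a ∘ σ) 0) ((a ∘ σ) 2) * (a ∘ σ) 1 := by
      show cc (a (σ 0)) (a (σ 1)) (a (σ 2)) * a (σ 0)
          = cc (a (σ 1)) (a (σ 0)) (a (σ 2)) * a (σ 1)
      rw [e0, e1, e2, cc_swap (a 0) (a 2) (a 1)]
      exact h
    obtain ⟨f, g, hfg⟩ := caseA_core (k := k) (a ∘ σ) hb hmut
    refine ⟨rename σ f, rename σ g, ?_⟩
    rw [mci_rename a σ, hfg, Ideal.map_span, Set.image_insert_eq, Set.image_singleton]

lemma descent' (p q r lam : ℕ) (hp : 0 < p) (hq : 0 < q) (hr : 0 < r)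
    (h : cc p q r * p = lam * q) :
    cc p q r * p = cc q p r * q ∨ cc q p r * q = cc r p q * r ∨ cc r p q * r = cc p q r * p :=
  descent (cc p q r * p) p q r _ _ _ lam hp hq hr (isMinRel_cc p q r hq) (isMinRel_cc q p r hp)
    (isMinRel_cc r p q hp) h le_rfl


lemma mem_span_triple {R : Type*} [CommRing R] {x a b c : R} :
    x ∈ Ideal.span ({a, b, c} : Set R) ↔ ∃ u v w, u * a + v * b + w * c = x := by
  constructor
  · intro hx
    rw [Ideal.mem_span_insert] at hx
    obtain ⟨u, z, hz, rfl⟩ := hx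
    rw [Ideal.mem_span_pair] at hz
    obtain ⟨v, w, rfl⟩ := hz
    exact ⟨u, v, w, by ring⟩
  · rintro ⟨u, v, w, rfl⟩
    refine Ideal.add_mem _ (Ideal.add_mem _ ?_ ?_) ?_
    · exact Ideal.mul_mem_left _ _ (Ideal.subset_span (by simp))
    · exact Ideal.mul_mem_left _ _ (Ideal.subset_span (by simp))
    · exact Ideal.mul_mem_left _ _ (Ideal.subset_span (by simp))

lemma exclusive (a : Fin 3 → ℕ)
    (hA : ∃ f g : MvPolynomial (Fin 3) k, monomialCurveIdeal k a = Ideal.span {f, g})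
    (hB : ∃ α₁ α₂ β₁ β₂ γ₁ γ₂ : ℕ, 0 < α₁ ∧ 0 < α₂ ∧ 0 < β₁ ∧ 0 < β₂ ∧ 0 < γ₁ ∧ 0 < γ₂ ∧
      monomialCurveIdeal k a = Ideal.span
        {(X 0 : MvPolynomial (Fin 3) k) ^ α₁ * X 2 ^ γ₂ - X 1 ^ (β₁ + β₂),
         (X 0 : MvPolynomial (Fin 3) k) ^ α₁ * X 0 ^ α₂ - X 1 ^ β₂ * X 2 ^ γ₁,
         (X 1 : MvPolynomial (Fin 3) k) ^ β₁ * X 0 ^ α₂ - X 2 ^ (γ₁ + γ₂)}) : False := by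
  obtain ⟨f, g, hfg⟩ := hA
  obtain ⟨α₁, α₂, β₁, β₂, γ₁, γ₂, hα₁, hα₂, hβ₁, hβ₂, hγ₁, hγ₂, hT⟩ := hB
  set m1 : MvPolynomial (Fin 3) k := X 0 ^ α₁ * X 2 ^ γ₂ - X 1 ^ (β₁ + β₂) with hm1
  set m2 : MvPolynomial (Fin 3) k := X 0 ^ α₁ * X 0 ^ α₂ - X 1 ^ β₂ * X 2 ^ γ₁ with hm2
  set m3 : MvPolynomial (Fin 3) k := X 1 ^ β₁ * X 0 ^ α₂ - X 2 ^ (γ₁ + γ₂) with hm3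
  have hspan : Ideal.span ({f, g} : Set (MvPolynomial (Fin 3) k)) = Ideal.span {m1, m2, m3} := by
    rw [← hfg, ← hT]
  have hf3 : f ∈ Ideal.span ({m1, m2, m3} : Set (MvPolynomial (Fin 3) k)) := by
    rw [← hspan]; exact Ideal.subset_span (by simp)
  have hg3 : g ∈ Ideal.span ({m1, m2, m3} : Set (MvPolynomial (Fin 3) k)) := by
    rw [← hspan]; exact Ideal.subset_span (by simp)
  obtain ⟨u11, u12, u13, hfu⟩ := mem_span_triple.mp hf3
  obtain ⟨u21, u22, u23, hgu⟩ := mem_span_triple.mp hg3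
  have hm : ∀ m : MvPolynomial (Fin 3) k, m ∈ ({m1, m2, m3} : Set (MvPolynomial (Fin 3) k)) →
      ∃ v1 v2, v1 * f + v2 * g = m := by
    intro m hmem
    rw [← Ideal.mem_span_pair, hspan]
    exact Ideal.subset_span hmem
  obtain ⟨v11, v12, h1⟩ := hm m1 (by simp)
  obtain ⟨v21, v22, h2⟩ := hm m2 (by simp)
  obtain ⟨v31, v32, h3⟩ := hm m3 (by simp)
  -- a syzygy has coefficients with zero constant term
  have hconst : ∀ (F : Fin 3 → Polynomial k), (∀ j, Polynomial.eval 0 (F j) = 0) →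
      ∀ q : MvPolynomial (Fin 3) k, aeval (R := k) F q = 0 → constantCoeff q = 0 := by
    intro F hF q hq
    have hcomp : (Polynomial.evalRingHom (0 : k)).comp
        ((aeval (R := k) F : MvPolynomial (Fin 3) k →ₐ[k] Polynomial k)
          : MvPolynomial (Fin 3) k →+* Polynomial k)
        = (constantCoeff : MvPolynomial (Fin 3) k →+* k) := by
      apply ringHom_ext
      · intro r; simp
      · intro j; simp [hF j]
    have hcq := congrArg (fun φ : MvPolynomial (Fin 3) k →+* k => φ q) hcomp
    simp only [RingHom.comp_apply, RingHom.coe_coe] at hcq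
    rw [← hcq, hq]
    simp
  have syz : ∀ q1 q2 q3 : MvPolynomial (Fin 3) k, q1 * m1 + q2 * m2 + q3 * m3 = 0 →
      constantCoeff q1 = 0 ∧ constantCoeff q2 = 0 ∧ constantCoeff q3 = 0 := by
    intro q1 q2 q3 hs
    refine ⟨?_, ?_, ?_⟩
    · set F : Fin 3 → Polynomial k := ![(0 : Polynomial k), Polynomial.X, 0] with hF
      have hM1 : aeval (R := k) F m1 = -(Polynomial.X ^ (β₁ + β₂)) := by
        rw [hm1]; simp [hF, zero_pow hα₁.ne']
      have hM2 : aeval (R := k) F m2 = 0 := by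
        rw [hm2]; simp [hF, zero_pow hα₁.ne', zero_pow hγ₁.ne']
      have hM3 : aeval (R := k) F m3 = 0 := by
        rw [hm3]; simp [hF, zero_pow hα₂.ne', zero_pow (by omega : γ₁ + γ₂ ≠ 0)]
      have hev := congrArg (aeval (R := k) F) hs
      rw [map_add, map_add, map_mul, map_mul, map_mul, hM1, hM2, hM3, map_zero,
        mul_zero, mul_zero, add_zero, add_zero, mul_neg, neg_eq_zero] at hev
      rcases mul_eq_zero.mp hev with h' | h'
      · exact hconst F (by intro j; fin_cases j <;> simp [hF]) q1 h'
      · exact absurd h' (pow_ne_zero _ Polynomial.X_ne_zero)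
    · set F : Fin 3 → Polynomial k := ![Polynomial.X, 0, 0] with hF
      have hM1 : aeval (R := k) F m1 = 0 := by
        rw [hm1]; simp [hF, zero_pow hγ₂.ne', zero_pow (by omega : β₁ + β₂ ≠ 0)]
      have hM2 : aeval (R := k) F m2 = Polynomial.X ^ α₁ * Polynomial.X ^ α₂ := by
        rw [hm2]; simp [hF, zero_pow hβ₂.ne']
      have hM3 : aeval (R := k) F m3 = 0 := by
        rw [hm3]; simp [hF, zero_pow hβ₁.ne', zero_pow (by omega : γ₁ + γ₂ ≠ 0)]
      have hev := congrArg (aeval (R := k) F) hs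
      rw [map_add, map_add, map_mul, map_mul, map_mul, hM1, hM2, hM3, map_zero,
        mul_zero, mul_zero, add_zero, zero_add, ← pow_add] at hev
      rcases mul_eq_zero.mp hev with h' | h'
      · exact hconst F (by intro j; fin_cases j <;> simp [hF]) q2 h'
      · exact absurd h' (pow_ne_zero _ Polynomial.X_ne_zero)
    · set F : Fin 3 → Polynomial k := ![(0 : Polynomial k), 0, Polynomial.X] with hF
      have hM1 : aeval (R := k) F m1 = 0 := by
        rw [hm1]; simp [hF, zero_pow hα₁.ne', zero_pow (by omega : β₁ + β₂ ≠ 0)]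
      have hM2 : aeval (R := k) F m2 = 0 := by
        rw [hm2]; simp [hF, zero_pow hα₁.ne', zero_pow hβ₂.ne']
      have hM3 : aeval (R := k) F m3 = -(Polynomial.X ^ (γ₁ + γ₂)) := by
        rw [hm3]; simp [hF, zero_pow hα₂.ne']
      have hev := congrArg (aeval (R := k) F) hs
      rw [map_add, map_add, map_mul, map_mul, map_mul, hM1, hM2, hM3, map_zero,
        mul_zero, mul_zero, add_zero, zero_add, mul_neg, neg_eq_zero] at hev
      rcases mul_eq_zero.mp hev with h' | h'
      · exact hconst F (by intro j; fin_cases j <;> simp [hF]) q3 h'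
      · exact absurd h' (pow_ne_zero _ Polynomial.X_ne_zero)
  -- the three syzygies from the double change of generators
  rw [← hfu, ← hgu] at h1 h2 h3
  have E1 : (v11 * u11 + v12 * u21 - 1) * m1 + (v11 * u12 + v12 * u22) * m2
      + (v11 * u13 + v12 * u23) * m3 = 0 := by linear_combination h1
  have E2 : (v21 * u11 + v22 * u21) * m1 + (v21 * u12 + v22 * u22 - 1) * m2
      + (v21 * u13 + v22 * u23) * m3 = 0 := by linear_combination h2
  have E3 : (v31 * u11 + v32 * u21) * m1 + (v31 * u12 + v32 * u22) * m2
      + (v31 * u13 + v32 * u23 - 1) * m3 = 0 := by linear_combination h3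
  obtain ⟨c11, c12, c13⟩ := syz _ _ _ E1
  obtain ⟨c21, c22, c23⟩ := syz _ _ _ E2
  obtain ⟨c31, c32, c33⟩ := syz _ _ _ E3
  simp only [map_add, map_mul, map_sub, map_one, sub_eq_zero] at c11 c12 c13 c21 c22 c23 c31 c32 c33
  -- build the matrices of constant terms
  set cC : MvPolynomial (Fin 3) k →+* k := constantCoeff with hcC
  set V : Matrix (Fin 3) (Fin 2) k := ![![cC v11, cC v12], ![cC v21, cC v22], ![cC v31, cC v32]]
    with hV
  set U : Matrix (Fin 2) (Fin 3) k := ![![cC u11, cC u12, cC u13], ![cC u21, cC u22, cC u23]]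
    with hU
  have hVU : V * U = 1 := by
    ext i j
    fin_cases i <;> fin_cases j <;> rw [Matrix.mul_apply] <;>
      simp only [hV, hU, Matrix.mul_apply, Fin.sum_univ_two, Matrix.cons_val', Matrix.cons_val_zero,
        Matrix.cons_val_one, Matrix.head_cons, Matrix.empty_val', Matrix.cons_val_fin_one,
        Matrix.head_fin_const, Matrix.one_apply, Matrix.cons_val_two, Matrix.tail_cons] <;>
      simp [Matrix.one_apply] <;>
      first
        | exact c11 | exact c12 | exact c13 | exact c21 | exact c22 | exact c23
        | exact c31 | exact c32 | exact c33
  have hl : ∀ x : Fin 3 → k, Matrix.toLin' V (Matrix.toLin' U x) = x := by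
    intro x
    rw [← Matrix.toLin'_mul_apply, hVU]
    simp
  have hinj : Function.Injective (Matrix.toLin' U) := by
    intro x y hxy
    rw [← hl x, ← hl y, hxy]
  have hle := LinearMap.finrank_le_finrank_of_injective hinj
  rw [Module.finrank_fin_fun, Module.finrank_fin_fun] at hle
  omega

end HerzogAux


/-- **Herzog (1970).** A monomial space curve is either a complete intersection, or its
ideal is generated by the three `2 × 2` minors of a matrix with rows
`(X₁^α₁, X₂^β₁, X₃^γ₁)` and `(X₂^β₂, X₃^γ₂, X₁^α₂)` — and exactly one of these occurs. -/
theorem herzog_structure (k : Type*) [Field k] (a : Fin 3 → ℕ)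
    (hpos : ∀ i, 0 < a i) (hgcd : Nat.gcd (a 0) (Nat.gcd (a 1) (a 2)) = 1) :
    Xor'
      (∃ f g : MvPolynomial (Fin 3) k, monomialCurveIdeal k a = Ideal.span {f, g})
      (∃ α₁ α₂ β₁ β₂ γ₁ γ₂ : ℕ, 0 < α₁ ∧ 0 < α₂ ∧ 0 < β₁ ∧ 0 < β₂ ∧ 0 < γ₁ ∧ 0 < γ₂ ∧
        monomialCurveIdeal k a = Ideal.span
          {(X 0 : MvPolynomial (Fin 3) k) ^ α₁ * X 2 ^ γ₂ - X 1 ^ (β₁ + β₂),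
           (X 0 : MvPolynomial (Fin 3) k) ^ α₁ * X 0 ^ α₂ - X 1 ^ β₂ * X 2 ^ γ₁,
           (X 1 : MvPolynomial (Fin 3) k) ^ β₁ * X 0 ^ α₂ - X 2 ^ (γ₁ + γ₂)}) := by
  have ha : ∀ i, 0 < a i := hpos
  by_cases hM : cc (a 0) (a 1) (a 2) * a 0 = cc (a 1) (a 0) (a 2) * a 1
      ∨ cc (a 1) (a 0) (a 2) * a 1 = cc (a 2) (a 0) (a 1) * a 2
      ∨ cc (a 2) (a 0) (a 1) * a 2 = cc (a 0) (a 1) (a 2) * a 0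
  · have hA := caseA (k := k) a ha hM
    exact Or.inl ⟨hA, fun hB => exclusive a hA hB⟩
  · -- no mutual pair: all representations are non-degenerate
    have h0 : ∀ x y, cc (a 0) (a 1) (a 2) * a 0 = x * a 1 + y * a 2 → 0 < x ∧ 0 < y := by
      intro x y hxy
      by_cases hx : x = 0
      · subst hx
        exfalso
        have h' : cc (a 0) (a 2) (a 1) * a 0 = y * a 2 := by
          rw [← cc_swap (a 0) (a 1) (a 2)]; omega
        have D := descent' (a 0) (a 2) (a 1) y (ha 0) (ha 2) (ha 1) h'
        rw [← cc_swap (a 0) (a 1) (a 2)] at D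
        rcases D with d | d | d
        · exact hM (Or.inr (Or.inr d.symm))
        · exact hM (Or.inr (Or.inl d.symm))
        · exact hM (Or.inl d.symm)
      · by_cases hy : y = 0
        · subst hy
          exfalso
          have h' : cc (a 0) (a 1) (a 2) * a 0 = x * a 1 := by omega
          exact hM (descent' (a 0) (a 1) (a 2) x (ha 0) (ha 1) (ha 2) h')
        · exact ⟨by omega, by omega⟩
    have h1 : ∀ x y, cc (a 1) (a 0) (a 2) * a 1 = x * a 0 + y * a 2 → 0 < x ∧ 0 < y := by
      intro x y hxy
      by_cases hx : x = 0
      · subst hx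
        exfalso
        have h' : cc (a 1) (a 2) (a 0) * a 1 = y * a 2 := by
          rw [← cc_swap (a 1) (a 0) (a 2)]; omega
        have D := descent' (a 1) (a 2) (a 0) y (ha 1) (ha 2) (ha 0) h'
        rw [← cc_swap (a 1) (a 0) (a 2), ← cc_swap (a 2) (a 0) (a 1)] at D
        rcases D with d | d | d
        · exact hM (Or.inr (Or.inl d))
        · exact hM (Or.inr (Or.inr d))
        · exact hM (Or.inl d)
      · by_cases hy : y = 0
        · subst hy
          exfalso
          have h' : cc (a 1) (a 0) (a 2) * a 1 = x * a 0 := by omega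
          have D := descent' (a 1) (a 0) (a 2) x (ha 1) (ha 0) (ha 2) h'
          rw [← cc_swap (a 2) (a 0) (a 1)] at D
          rcases D with d | d | d
          · exact hM (Or.inl d.symm)
          · exact hM (Or.inr (Or.inr d.symm))
          · exact hM (Or.inr (Or.inl d.symm))
        · exact ⟨by omega, by omega⟩
    have h2 : ∀ x y, cc (a 2) (a 0) (a 1) * a 2 = x * a 0 + y * a 1 → 0 < x ∧ 0 < y := by
      intro x y hxy
      by_cases hx : x = 0
      · subst hx
        exfalso
        have h' : cc (a 2) (a 1) (a 0) * a 2 = y * a 1 := by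
          rw [← cc_swap (a 2) (a 0) (a 1)]; omega
        have D := descent' (a 2) (a 1) (a 0) y (ha 2) (ha 1) (ha 0) h'
        rw [← cc_swap (a 2) (a 0) (a 1), ← cc_swap (a 1) (a 0) (a 2),
          ← cc_swap (a 0) (a 1) (a 2)] at D
        rcases D with d | d | d
        · exact hM (Or.inr (Or.inl d.symm))
        · exact hM (Or.inl d.symm)
        · exact hM (Or.inr (Or.inr d.symm))
      · by_cases hy : y = 0
        · subst hy
          exfalso
          have h' : cc (a 2) (a 0) (a 1) * a 2 = x * a 0 := by omega
          have D := descent' (a 2) (a 0) (a 1) x (ha 2) (ha 0) (ha 1) h'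
          rw [← cc_swap (a 0) (a 1) (a 2), ← cc_swap (a 1) (a 0) (a 2)] at D
          rcases D with d | d | d
          · exact hM (Or.inr (Or.inr d))
          · exact hM (Or.inl d)
          · exact hM (Or.inr (Or.inl d))
        · exact ⟨by omega, by omega⟩
    have hB := caseB (k := k) a ha h0 h1 h2
    exact Or.inr ⟨hB, fun hA => exclusive a hA hB⟩
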